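/- arXiv:2301.10029 — 6 statements merged into one kernel-verified Lean document; each statement's English description precedes it below -/
import Mathlib

section
/- For any bounded linear operator S on a complex Hilbert space, the numerical radius satisfies w(S) ≤ (1/2)(‖S‖ + ‖S²‖^{1/2}). -/
set_option maxHeartbeats 1000000


lemma poly_contra (α p M s t D : ℝ) (hαp : α ≤ p) (hpM : p < M) (hα0 : 0 < α)
    (hs0 : 0 ≤ s) (hsM : s < (2*α - M)^2) (hs0αp : (2*α - M)^2 ≤ α*p) (hsαp : s < α*p)
    (hM2α : M < 2*α) (hM0 : 0 < M)
    (hD : D = M^2 - p^2) (ht : t*D = α*M^2 - p*s)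
    (h3 : (t*p - s)^2 ≤ M^2 * (t^2 - 2*t*α + p^2)) : False := by
  have hDpos : 0 < D := by rw [hD]; nlinarith
  have hB : ((α*M^2 - p*s)*p - s*D)^2 ≤ M^2 * ((α*M^2 - p*s)^2 - 2*α*(α*M^2 - p*s)*D + p^2*D^2) := by
    have e1 : (α*M^2 - p*s)*p - s*D = (t*p - s)*D := by rw [← ht]; ring
    have e2 : (α*M^2 - p*s)^2 - 2*α*(α*M^2 - p*s)*D + p^2*D^2 = (t^2 - 2*t*α + p^2)*D^2 := by
      rw [← ht]; ring
    rw [e1, e2]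
    calc ((t*p - s)*D)^2 = (t*p-s)^2 * D^2 := by ring
      _ ≤ (M^2 * (t^2 - 2*t*α + p^2)) * D^2 := mul_le_mul_of_nonneg_right h3 (sq_nonneg D)
      _ = M^2 * ((t^2 - 2*t*α + p^2) * D^2) := by ring
  set F := s^2 - 2*α*p*s + α^2*M^2 + p^4 - M^2*p^2 with hFdef
  have hDF : D * F ≤ 0 := by
    have e3 : (α*M^2 - p*s)*p - s*D = M^2*(α*p - s) := by rw [hD]; ring
    have e4 : (α*M^2 - p*s)^2 - 2*α*(α*M^2 - p*s)*D + p^2*D^2 = (α*p-s)^2*M^2 - D*F := by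
      rw [hD, hFdef]; ring
    rw [e3, e4] at hB
    nlinarith [hB, hM0, mul_pos hM0 hM0, sq_nonneg (α*p - s)]
  have hG : D * (p^2 - α^2) ≤ (α*p - (2*α - M)^2)^2 := by
    rw [hD]
    nlinarith [sq_nonneg ((2*α-M)^2 - 2*α^2 + p^2),
      mul_nonneg (mul_nonneg (by linarith : (0:ℝ) ≤ 2*α - M) (by linarith : (0:ℝ) ≤ M - α))
        (by nlinarith : (0:ℝ) ≤ p^2 - α^2),
      mul_nonneg (sq_nonneg (2*α - M)) (sq_nonneg (α - p))]
  have hstep : (α*p - (2*α-M)^2)^2 < (α*p - s)^2 := by nlinarith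
  have hF : 0 < F := by
    have e5 : F = (α*p - s)^2 - D*(p^2 - α^2) := by rw [hFdef, hD]; ring
    rw [e5]; linarith
  nlinarith [mul_pos hDpos hF]

lemma scalar_core (α p m s : ℝ) (hαp : α ≤ p) (hpm : p ≤ m) (hs0 : 0 ≤ s)
    (hcon : ∀ t : ℝ, t * p - s ≤ m * Real.sqrt (t^2 - 2*t*α + p^2)) :
    2 * α ≤ m + Real.sqrt s := by
  by_contra hlt
  push_neg at hlt
  have hσ0 : 0 ≤ Real.sqrt s := Real.sqrt_nonneg s
  have hσ2 : (Real.sqrt s)^2 = s := Real.sq_sqrt hs0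
  have hαm : α ≤ m := hαp.trans hpm
  have hσα : Real.sqrt s < α := by linarith
  have hα0 : 0 < α := lt_of_le_of_lt hσ0 hσα
  have hsαp : s < α * p := by nlinarith
  obtain ⟨M, hmM, hM2ασ⟩ : ∃ M, m < M ∧ M < 2*α - Real.sqrt s :=
    ⟨(m + 2*α - Real.sqrt s)/2, by linarith, by linarith⟩
  have hpM : p < M := lt_of_le_of_lt hpm hmM
  have hM0 : 0 < M := lt_of_le_of_lt (hα0.le.trans hαp) hpM
  have hM2α : M < 2*α := by linarith
  have hsM : s < (2*α - M)^2 := by nlinarith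
  have hs0αp : (2*α - M)^2 ≤ α * p := by nlinarith
  have hD : (0:ℝ) < M^2 - p^2 := by nlinarith
  set t := (α*M^2 - p*s)/(M^2 - p^2) with htdef
  have hu : t * (M^2 - p^2) = α*M^2 - p*s := div_mul_cancel₀ _ (ne_of_gt hD)
  have h2 : t*p - s ≤ M * Real.sqrt (t^2 - 2*t*α + p^2) :=
    le_trans (hcon t) (mul_le_mul_of_nonneg_right hmM.le (Real.sqrt_nonneg _))
  have hQnn : 0 ≤ t^2 - 2*t*α + p^2 := by nlinarith [sq_nonneg (t - α)]
  have heq : (t*p - s) * (M^2 - p^2) = M^2 * (α*p - s) := by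
    have e : (t*p - s) * (M^2 - p^2) = (t*(M^2-p^2))*p - s*(M^2-p^2) := by ring
    rw [e, hu]; ring
  have hL : 0 < t*p - s := by
    by_contra h6
    push_neg at h6
    nlinarith [mul_nonneg (neg_nonneg.2 h6) hD.le, mul_pos (mul_pos hM0 hM0) (sub_pos.2 hsαp)]
  have h3 : (t*p - s)^2 ≤ M^2 * (t^2 - 2*t*α + p^2) := by
    have hsq : (Real.sqrt (t^2 - 2*t*α + p^2))^2 = t^2 - 2*t*α + p^2 := Real.sq_sqrt hQnn
    nlinarith [Real.sqrt_nonneg (t^2 - 2*t*α + p^2), h2, hL]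
  exact poly_contra α p M s t (M^2 - p^2) hαp hpM hα0 hs0 hsM hs0αp hsαp hM2α hM0 rfl hu h3

open scoped InnerProductSpace
variable {H : Type*} [NormedAddCommGroup H] [InnerProductSpace ℂ H] [CompleteSpace H]

lemma two_re_inner_le_aux (S : H →L[ℂ] H) (x : H) (hx : ‖x‖ = 1) :
    2 * (⟪S x, x⟫_ℂ).re ≤ ‖S‖ + Real.sqrt ‖S ^ 2‖ := by
  have hre : (⟪S x, x⟫_ℂ).re ≤ ‖⟪S x, x⟫_ℂ‖ := Complex.re_le_norm _
  have hinner : ‖⟪S x, x⟫_ℂ‖ ≤ ‖S x‖ := by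
    simpa [hx] using norm_inner_le_norm (𝕜 := ℂ) (S x) x
  have hαp : (⟪S x, x⟫_ℂ).re ≤ ‖S x‖ := hre.trans hinner
  have hpm : ‖S x‖ ≤ ‖S‖ := by simpa [hx] using S.le_opNorm x
  by_cases hp : ‖S x‖ = 0
  · have h0 : (⟪S x, x⟫_ℂ).re ≤ 0 := by rw [hp] at hαp; exact hαp
    have : (0:ℝ) ≤ ‖S‖ + Real.sqrt ‖S ^ 2‖ := by positivity
    linarith
  · have hppos : 0 < ‖S x‖ := lt_of_le_of_ne (norm_nonneg _) (Ne.symm hp)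
    apply scalar_core _ _ _ _ hαp hpm (norm_nonneg (S ^ 2))
    intro t
    set v := (t : ℂ) • x - S x with hv
    have hSv : S v = (t : ℂ) • S x - S (S x) := by rw [hv, map_sub, map_smul]
    have hre2 : (⟪S v, S x⟫_ℂ).re = t * ‖S x‖^2 - (⟪S (S x), S x⟫_ℂ).re := by
      have h9 : ((starRingEnd ℂ) (t:ℂ) * ⟪S x, S x⟫_ℂ).re = t * ‖S x‖^2 := by
        have hwre : (⟪S x, S x⟫_ℂ).re = ‖S x‖^2 := by
          simpa using inner_self_eq_norm_sq (𝕜 := ℂ) (S x)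
        have hwim : (⟪S x, S x⟫_ℂ).im = 0 := by
          exact inner_self_im (𝕜 := ℂ) (S x)
        rw [Complex.conj_ofReal]
        rw [Complex.mul_re, hwre, hwim]; simp
      rw [hSv, inner_sub_left, inner_smul_left, Complex.sub_re, h9]
    have hS2x : ‖S (S x)‖ ≤ ‖S ^ 2‖ := by
      have : S (S x) = (S ^ 2) x := by rw [pow_two]; rfl
      rw [this]
      have h := (S ^ 2).le_opNorm x; rw [hx, mul_one] at h; exact h
    have hlow : t * ‖S x‖^2 - ‖S ^ 2‖ * ‖S x‖ ≤ (⟪S v, S x⟫_ℂ).re := by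
      rw [hre2]
      have h1 : (⟪S (S x), S x⟫_ℂ).re ≤ ‖S (S x)‖ * ‖S x‖ := by
        refine le_trans (Complex.re_le_norm _) ?_
        exact norm_inner_le_norm (𝕜 := ℂ) _ _
      nlinarith [mul_le_mul_of_nonneg_right hS2x (norm_nonneg (S x))]
    have hhigh : (⟪S v, S x⟫_ℂ).re ≤ ‖S‖ * ‖v‖ * ‖S x‖ := by
      refine le_trans (Complex.re_le_norm _) (le_trans (norm_inner_le_norm (𝕜 := ℂ) _ _) ?_)
      exact mul_le_mul_of_nonneg_right (S.le_opNorm v) (norm_nonneg _)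
    have hnv : ‖v‖ = Real.sqrt (t^2 - 2*t*(⟪S x, x⟫_ℂ).re + ‖S x‖^2) := by
      have h2 : ‖v‖^2 = t^2 - 2*t*(⟪S x, x⟫_ℂ).re + ‖S x‖^2 := by
        rw [hv, @norm_sub_sq ℂ]
        have e1 : ‖(t:ℂ) • x‖ = |t| := by
          rw [norm_smul, hx, mul_one, Complex.norm_real, Real.norm_eq_abs]
        have e2 : ⟪(t:ℂ) • x, S x⟫_ℂ = (t:ℂ) * ⟪x, S x⟫_ℂ := by
          rw [inner_smul_left, Complex.conj_ofReal]
        have e3 : (⟪x, S x⟫_ℂ).re = (⟪S x, x⟫_ℂ).re := by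
          rw [show ⟪x, S x⟫_ℂ = (starRingEnd ℂ) ⟪S x, x⟫_ℂ from (inner_conj_symm _ _).symm,
            Complex.conj_re]
        rw [e1, e2]
        simp only [RCLike.re_to_complex, Complex.mul_re, Complex.ofReal_re, Complex.ofReal_im]
        rw [sq_abs, e3]
        ring
      rw [← h2, Real.sqrt_sq (norm_nonneg v)]
    have hchain : t * ‖S x‖^2 - ‖S ^ 2‖ * ‖S x‖ ≤
        ‖S‖ * Real.sqrt (t^2 - 2*t*(⟪S x, x⟫_ℂ).re + ‖S x‖^2) * ‖S x‖ := by
      calc t * ‖S x‖^2 - ‖S ^ 2‖ * ‖S x‖ ≤ (⟪S v, S x⟫_ℂ).re := hlow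
        _ ≤ ‖S‖ * ‖v‖ * ‖S x‖ := hhigh
        _ = ‖S‖ * Real.sqrt (t^2 - 2*t*(⟪S x, x⟫_ℂ).re + ‖S x‖^2) * ‖S x‖ := by rw [hnv]
    have := le_of_mul_le_mul_right (a := ‖S x‖)
      (by linarith [hchain] : (t * ‖S x‖ - ‖S ^ 2‖) * ‖S x‖ ≤
        (‖S‖ * Real.sqrt (t^2 - 2*t*(⟪S x, x⟫_ℂ).re + ‖S x‖^2)) * ‖S x‖) hppos
    linarith [this]

lemma norm_inner_le_half (S : H →L[ℂ] H) (x : H) (hx : ‖x‖ = 1) :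
    ‖⟪S x, x⟫_ℂ‖ ≤ (1 / 2) * (‖S‖ + Real.sqrt ‖S ^ 2‖) := by
  rcases eq_or_ne (⟪S x, x⟫_ℂ) 0 with h0 | h0
  · rw [h0, norm_zero]; positivity
  · set z := ⟪S x, x⟫_ℂ with hz
    set c : ℂ := z / ‖z‖ with hc
    have hzn : (0:ℝ) < ‖z‖ := norm_pos_iff.2 h0
    have hcnorm : ‖c‖ = 1 := by
      rw [hc, norm_div, Complex.norm_real, Real.norm_eq_abs, abs_of_pos hzn,
        div_self (ne_of_gt hzn)]
    have hinner : ⟪(c • S) x, x⟫_ℂ = (‖z‖ : ℂ) := by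
      rw [ContinuousLinearMap.smul_apply, inner_smul_left, hc]
      rw [map_div₀, Complex.conj_ofReal]
      rw [div_mul_eq_mul_div, ← hz]
      have h1 : (starRingEnd ℂ) z * z = ((‖z‖:ℂ))^2 := by
        rw [mul_comm, Complex.mul_conj, Complex.normSq_eq_norm_sq]
        push_cast
        ring
      rw [h1, sq, mul_div_assoc, div_self (by exact_mod_cast ne_of_gt hzn), mul_one]
    have hkey := two_re_inner_le_aux (c • S) x hx
    rw [hinner] at hkey
    have hnormS : ‖c • S‖ = ‖S‖ := by rw [norm_smul, hcnorm, one_mul]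
    have hsq : ‖(c • S) ^ 2‖ = ‖S ^ 2‖ := by
      rw [smul_pow, norm_smul, norm_pow, hcnorm, one_pow, one_mul]
    rw [hnormS, hsq] at hkey
    have : ((‖z‖ : ℂ)).re = ‖z‖ := rfl
    rw [this] at hkey
    linarith

/-- The numerical radius of a bounded operator. -/
noncomputable def numRadius (S : H →L[ℂ] H) : ℝ :=
  ⨆ x : {x : H // ‖x‖ = 1}, ‖⟪S x, x⟫_ℂ‖

theorem numRadius_le_half_norm_add_sqrt_norm_sq (S : H →L[ℂ] H) :
    numRadius S ≤ (1 / 2) * (‖S‖ + Real.sqrt ‖S ^ 2‖) := by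
  refine Real.iSup_le (fun x => norm_inner_le_half S x.1 x.2) (by positivity)
end

section
/- If S and T are normal bounded operators on a complex Hilbert space, then ‖S + T‖ ≤ ‖ |S| + |T| ‖, where |S| = (S*S)^{1/2}. -/
open scoped InnerProductSpace
variable {H : Type*} [NormedAddCommGroup H] [InnerProductSpace ℂ H] [CompleteSpace H]

/-- The absolute value `|S| = (S*S)^(1/2)` of a bounded operator. -/
noncomputable def absOp (S : H →L[ℂ] H) : H →L[ℂ] H := CFC.sqrt (star S * S)

namespace NormAbsAux

open scoped Polynomial
open ContinuousLinearMap Polynomial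

/-- An operator commuting with a selfadjoint operator commutes with any continuous function
of it. -/
lemma commute_cfc_aux (S P : H →L[ℂ] H) (hP : IsSelfAdjoint P) (h : Commute S P)
    (f : ℝ → ℝ) : Commute S (cfc f P) := by
  by_cases hf : ContinuousOn f (spectrum ℝ P)
  · rw [cfc_apply f P hP hf]
    suffices hall : ∀ q : C(spectrum ℝ P, ℝ), Commute S (cfcHom hP q) from hall _
    intro q
    have haev : ∀ p : ℝ[X], Commute S (aeval P p) := by
      intro p
      induction p using Polynomial.induction_on' with
      | add p q hp hq => rw [map_add]; exact hp.add_right hq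
      | monomial n c =>
          rw [aeval_monomial]
          exact (Commute.symm (Algebra.commutes c S : _)).mul_right (h.pow_right n)
    have hcont : Continuous (cfcHom hP (R := ℝ)) := cfcHom_continuous hP
    have hclosed : IsClosed {q : C(spectrum ℝ P, ℝ) | Commute S (cfcHom hP q)} :=
      isClosed_eq (by continuity) (by continuity)
    have hdense : Dense (polynomialFunctions (spectrum ℝ P) : Set C(spectrum ℝ P, ℝ)) := by
      have h2 := polynomialFunctions.topologicalClosure (spectrum ℝ P)
      rw [dense_iff_closure_eq, ← Subalgebra.topologicalClosure_coe, h2]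
      rfl
    refine hclosed.closure_subset_iff.mpr ?_ (by rw [hdense.closure_eq]; trivial)
    rintro g hg
    rw [polynomialFunctions_coe] at hg
    obtain ⟨p, rfl⟩ := hg
    have h1 : toContinuousMapOnAlgHom (spectrum ℝ P) p
        = aeval (toContinuousMapOnAlgHom (spectrum ℝ P) X) p := by
      rw [aeval_algHom_apply, aeval_X_left_apply]
    have h2 : (cfcHom hP (R := ℝ)) (toContinuousMapOnAlgHom (spectrum ℝ P) p)
        = aeval P p := by
      rw [h1, ← aeval_algHom_apply (cfcHom hP (R := ℝ))]
      have h3 : toContinuousMapOnAlgHom (spectrum ℝ P) X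
          = (ContinuousMap.id ℝ).restrict (spectrum ℝ P) := by
        ext t; simp [toContinuousMapOnAlgHom]
      rw [h3, cfcHom_id hP]
    simpa only [Set.mem_setOf_eq, h2] using haev p
  · rw [cfc_apply_of_not_continuousOn P hf]
    exact Commute.zero_right S

set_option synthInstance.maxHeartbeats 200000 in
set_option maxHeartbeats 800000 in
lemma absOp_eq_cfc' (S : H →L[ℂ] H) : CFC.sqrt (star S * S) = cfc Real.sqrt (star S * S) := by
  have hP0 : (0:H →L[ℂ] H) ≤ star S * S := star_mul_self_nonneg S
  have hnn : (0:H →L[ℂ] H) ≤ cfc Real.sqrt (star S * S) :=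
    cfc_nonneg fun t _ => Real.sqrt_nonneg t
  refine CFC.sqrt_unique ?_ hnn
  rw [← cfc_mul _ _ _ (by fun_prop) (by fun_prop)]
  have hcg : cfc (fun x => Real.sqrt x * Real.sqrt x) (star S * S) = cfc (id : ℝ → ℝ) (star S * S) :=
    cfc_congr fun t ht => Real.mul_self_sqrt (spectrum_nonneg_of_nonneg hP0 ht)
  rw [hcg, cfc_id ℝ _]

set_option maxHeartbeats 1000000 in
/-- Generalized Cauchy–Schwarz inequality for a normal operator. -/
lemma key_cs (S : H →L[ℂ] H) (hS : IsStarNormal S) (x y : H) :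
    ‖⟪S x, y⟫_ℂ‖ ≤ Real.sqrt (RCLike.re ⟪cfc Real.sqrt (star S * S) x, x⟫_ℂ)
      * Real.sqrt (RCLike.re ⟪cfc Real.sqrt (star S * S) y, y⟫_ℂ) := by
  set P := star S * S with hPdef
  have hP0 : (0:H→L[ℂ]H) ≤ P := star_mul_self_nonneg S
  have hPsa : IsSelfAdjoint P := IsSelfAdjoint.star_mul_self S
  have hspec : ∀ t ∈ spectrum ℝ P, 0 ≤ t := fun t ht => spectrum_nonneg_of_nonneg hP0 ht
  have hSS : S * star S = P := hS.star_comm_self.symm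
  have hcomm : Commute S P := by
    calc S * P = (S * star S) * S := (mul_assoc S (star S) S).symm
    _ = P * S := by rw [hSS]
  set A := cfc Real.sqrt P with hAdef
  have hA0 : (0:H→L[ℂ]H) ≤ A := cfc_nonneg fun t _ => Real.sqrt_nonneg t
  have hAsa : IsSelfAdjoint A := cfc_predicate Real.sqrt P
  set a := RCLike.re ⟪A x, x⟫_ℂ with hadef
  set b := RCLike.re ⟪A y, y⟫_ℂ with hbdef
  have ha0 : 0 ≤ a := ((ContinuousLinearMap.nonneg_iff_isPositive A).mp hA0).re_inner_nonneg_left x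
  have hb0 : 0 ≤ b := ((ContinuousLinearMap.nonneg_iff_isPositive A).mp hA0).re_inner_nonneg_left y
  have hmain : ∀ ε : ℝ, 0 < ε → ‖⟪S x, y⟫_ℂ‖^2 ≤ (a + ε * ‖x‖^2) * b := by
    intro ε hε
    have hgpos : ∀ t : ℝ, 0 < Real.sqrt t + ε := fun t => by positivity
    set g : ℝ → ℝ := fun t => Real.sqrt (Real.sqrt t + ε) with hgdef
    have hgpos' : ∀ t, 0 < g t := fun t => Real.sqrt_pos.mpr (hgpos t)
    have hgne : ∀ t, g t ≠ 0 := fun t => (hgpos' t).ne'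
    have hgc : Continuous g := by fun_prop
    set h : ℝ → ℝ := fun t => (g t)⁻¹ with hhdef
    have hhc : Continuous h := hgc.inv₀ hgne
    set C := cfc g P with hCdef
    set D := cfc h P with hDdef
    have hDC : D * C = 1 := by
      rw [← cfc_mul _ _ _ (by fun_prop) (by fun_prop)]
      have h1 : cfc (fun t => h t * g t) P = cfc (fun _ : ℝ => (1:ℝ)) P :=
        cfc_congr fun t _ => inv_mul_cancel₀ (hgne t)
      rw [h1, cfc_const 1 P, map_one]
    have hCsa : IsSelfAdjoint C := cfc_predicate g P
    have hDsa : IsSelfAdjoint D := cfc_predicate h P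
    have hCadj : adjoint C = C := by rw [← star_eq_adjoint]; exact hCsa
    have hfact : (S * D) * C = S := by rw [mul_assoc, hDC, mul_one]
    set W := adjoint (S * D) with hWdef
    have hinner : ⟪S x, y⟫_ℂ = ⟪C x, W y⟫_ℂ := by
      conv_lhs => rw [← hfact]
      rw [ContinuousLinearMap.mul_apply, ← ContinuousLinearMap.adjoint_inner_right]
    -- ‖C x‖²
    have hCC : C * C = A + algebraMap ℝ (H →L[ℂ] H) ε := by
      rw [← cfc_mul _ _ _ (by fun_prop) (by fun_prop)]
      have h1 : cfc (fun t => g t * g t) P = cfc (fun t => Real.sqrt t + ε) P :=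
        cfc_congr fun t _ => Real.mul_self_sqrt (hgpos t).le
      rw [h1, cfc_add P Real.sqrt (fun _ => ε) (by fun_prop) (by fun_prop), cfc_const ε P]
    have hCx : ‖C x‖^2 = a + ε * ‖x‖^2 := by
      have h1 := ContinuousLinearMap.adjoint_inner_left C (C x) x
      rw [hCadj] at h1
      have h2 : (algebraMap ℝ (H →L[ℂ] H) ε) x = (ε:ℂ) • x := by
        rw [Algebra.algebraMap_eq_smul_one]
        show ε • x = (ε:ℂ) • x
        rw [← algebraMap_smul ℂ ε x]
        norm_num
      have h3 : ⟪C x, C x⟫_ℂ = ⟪x, A x⟫_ℂ + (ε:ℂ) * ⟪x, x⟫_ℂ := by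
        rw [h1, ← ContinuousLinearMap.mul_apply, hCC, ContinuousLinearMap.add_apply, h2,
          inner_add_right, inner_smul_right]
      have h4 := congrArg RCLike.re h3
      have h5 : RCLike.re ((ε:ℂ) * ⟪x, x⟫_ℂ) = ε * RCLike.re ⟪x, x⟫_ℂ := by
        simp
      rw [map_add, h5, inner_self_eq_norm_sq (𝕜 := ℂ) x,
        inner_self_eq_norm_sq (𝕜 := ℂ) (C x), inner_re_symm] at h4
      rw [h4, hadef]
    -- ‖W y‖²
    have hWy : ‖W y‖^2 ≤ b := by
      set m : ℝ → ℝ := fun t => (Real.sqrt t + ε)⁻¹ with hmdef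
      have hmne : ∀ t:ℝ, Real.sqrt t + ε ≠ 0 := fun t => (hgpos t).ne'
      have hmc : Continuous m := by
        apply Continuous.inv₀ (by fun_prop) hmne
      have hDD : D * D = cfc m P := by
        rw [← cfc_mul _ _ _ (by fun_prop) (by fun_prop)]
        refine cfc_congr fun t _ => ?_
        show (g t)⁻¹ * (g t)⁻¹ = (Real.sqrt t + ε)⁻¹
        rw [← mul_inv, Real.mul_self_sqrt (hgpos t).le]
      have hSE : Commute S (cfc m P) := commute_cfc_aux S P hPsa hcomm m
      have hM : (S * D) * W = cfc (fun t => m t * t) P := by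
        have hW' : W = D * star S := by
          rw [hWdef, ← star_eq_adjoint, star_mul, star_eq_adjoint, ← star_eq_adjoint,
            hDsa.star_eq]
        rw [hW']
        calc (S * D) * (D * star S) = S * (D * D) * star S := by
              rw [mul_assoc S D (D * star S), ← mul_assoc D D (star S),
                ← mul_assoc S (D * D) (star S)]
        _ = S * cfc m P * star S := by rw [hDD]
        _ = cfc m P * S * star S := by rw [hSE.eq]
        _ = cfc m P * P := by rw [mul_assoc, hSS]
        _ = cfc m P * cfc (id : ℝ → ℝ) P := by rw [cfc_id ℝ P]
        _ = cfc (fun t => m t * t) P := by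
              rw [← cfc_mul _ _ _ (by fun_prop) (by fun_prop)]
              rfl
      have hMle : cfc (fun t => m t * t) P ≤ A := by
        refine cfc_mono (fun t ht => ?_) (by fun_prop) (by fun_prop)
        have ht0 := hspec t ht
        show (Real.sqrt t + ε)⁻¹ * t ≤ Real.sqrt t
        rw [inv_mul_le_iff₀ (hgpos t)]
        nlinarith [Real.sq_sqrt ht0, Real.sqrt_nonneg t]
      have h1 : ⟪y, ((S * D) * W) y⟫_ℂ = ⟪W y, W y⟫_ℂ := by
        rw [ContinuousLinearMap.mul_apply, ← ContinuousLinearMap.adjoint_inner_left, ← hWdef]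
      have h2 : ‖W y‖^2 = RCLike.re ⟪((S * D) * W) y, y⟫_ℂ := by
        rw [← inner_self_eq_norm_sq (𝕜 := ℂ), ← h1, inner_re_symm]
      rw [h2, hM]
      have h3 := ((ContinuousLinearMap.le_def _ _).mp hMle).re_inner_nonneg_left y
      rw [ContinuousLinearMap.sub_apply, inner_sub_left, map_sub] at h3
      linarith
    have hcs : ‖⟪S x, y⟫_ℂ‖ ≤ ‖C x‖ * ‖W y‖ := by
      rw [hinner]; exact norm_inner_le_norm _ _
    calc ‖⟪S x, y⟫_ℂ‖^2 ≤ (‖C x‖ * ‖W y‖)^2 :=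
          pow_le_pow_left₀ (norm_nonneg _) hcs 2
    _ = ‖C x‖^2 * ‖W y‖^2 := by ring
    _ ≤ (a + ε * ‖x‖^2) * b := by
          rw [hCx]
          exact mul_le_mul_of_nonneg_left hWy (by positivity)
  have hsq : ‖⟪S x, y⟫_ℂ‖^2 ≤ a * b := by
    refine le_of_forall_pos_le_add fun δ hδ => ?_
    have hε : 0 < δ / (‖x‖^2 * b + 1) := by positivity
    have hm := hmain _ hε
    have h1 : δ / (‖x‖^2 * b + 1) * (‖x‖^2 * b) ≤ δ := by
      rw [div_mul_eq_mul_div, div_le_iff₀ (by positivity)]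
      nlinarith [sq_nonneg ‖x‖, hδ.le]
    nlinarith
  calc ‖⟪S x, y⟫_ℂ‖ = Real.sqrt (‖⟪S x, y⟫_ℂ‖^2) := (Real.sqrt_sq (norm_nonneg _)).symm
  _ ≤ Real.sqrt (a * b) := Real.sqrt_le_sqrt hsq
  _ = Real.sqrt a * Real.sqrt b := Real.sqrt_mul ha0 b

end NormAbsAux

set_option maxHeartbeats 1000000 in
theorem norm_add_le_norm_abs_add_abs (S T : H →L[ℂ] H)
    (hS : IsStarNormal S) (hT : IsStarNormal T) :
    ‖S + T‖ ≤ ‖absOp S + absOp T‖ := by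
  open ContinuousLinearMap NormAbsAux in
  set R := absOp S + absOp T with hRdef
  have habsS : absOp S = cfc Real.sqrt (star S * S) := absOp_eq_cfc' S
  have habsT : absOp T = cfc Real.sqrt (star T * T) := absOp_eq_cfc' T
  have hS0 : (0:H→L[ℂ]H) ≤ absOp S := habsS ▸ cfc_nonneg fun t _ => Real.sqrt_nonneg t
  have hT0 : (0:H→L[ℂ]H) ≤ absOp T := habsT ▸ cfc_nonneg fun t _ => Real.sqrt_nonneg t
  have hkey : ∀ x y : H, ‖⟪(S + T) x, y⟫_ℂ‖ ≤ ‖R‖ * (‖x‖ * ‖y‖) := by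
    intro x y
    set aS := RCLike.re ⟪absOp S x, x⟫_ℂ with haS
    set bS := RCLike.re ⟪absOp S y, y⟫_ℂ with hbS
    set aT := RCLike.re ⟪absOp T x, x⟫_ℂ with haT
    set bT := RCLike.re ⟪absOp T y, y⟫_ℂ with hbT
    have haS0 : 0 ≤ aS :=
      ((ContinuousLinearMap.nonneg_iff_isPositive _).mp hS0).re_inner_nonneg_left x
    have hbS0 : 0 ≤ bS :=
      ((ContinuousLinearMap.nonneg_iff_isPositive _).mp hS0).re_inner_nonneg_left y
    have haT0 : 0 ≤ aT :=
      ((ContinuousLinearMap.nonneg_iff_isPositive _).mp hT0).re_inner_nonneg_left x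
    have hbT0 : 0 ≤ bT :=
      ((ContinuousLinearMap.nonneg_iff_isPositive _).mp hT0).re_inner_nonneg_left y
    have hkS : ‖⟪S x, y⟫_ℂ‖ ≤ Real.sqrt aS * Real.sqrt bS := by
      rw [haS, hbS, habsS]; exact key_cs S hS x y
    have hkT : ‖⟪T x, y⟫_ℂ‖ ≤ Real.sqrt aT * Real.sqrt bT := by
      rw [haT, hbT, habsT]; exact key_cs T hT x y
    have hsum1 : ‖⟪(S + T) x, y⟫_ℂ‖ ≤ Real.sqrt aS * Real.sqrt bS
        + Real.sqrt aT * Real.sqrt bT := by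
      rw [ContinuousLinearMap.add_apply, inner_add_left]
      exact (norm_add_le _ _).trans (add_le_add hkS hkT)
    -- Cauchy-Schwarz in ℝ²
    have hcs2 : Real.sqrt aS * Real.sqrt bS + Real.sqrt aT * Real.sqrt bT
        ≤ Real.sqrt (aS + aT) * Real.sqrt (bS + bT) := by
      rw [← Real.sqrt_mul (by linarith) (bS + bT)]
      rw [show Real.sqrt aS * Real.sqrt bS + Real.sqrt aT * Real.sqrt bT
        = Real.sqrt ((Real.sqrt aS * Real.sqrt bS + Real.sqrt aT * Real.sqrt bT)^2) from
          (Real.sqrt_sq (by positivity)).symm]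
      refine Real.sqrt_le_sqrt ?_
      nlinarith [sq_nonneg (Real.sqrt aS * Real.sqrt bT - Real.sqrt aT * Real.sqrt bS),
        Real.sq_sqrt haS0, Real.sq_sqrt hbS0, Real.sq_sqrt haT0, Real.sq_sqrt hbT0,
        Real.sqrt_nonneg aS, Real.sqrt_nonneg bS, Real.sqrt_nonneg aT, Real.sqrt_nonneg bT]
    have hRx : aS + aT = RCLike.re ⟪R x, x⟫_ℂ := by
      rw [hRdef, ContinuousLinearMap.add_apply, inner_add_left, map_add]
    have hRy : bS + bT = RCLike.re ⟪R y, y⟫_ℂ := by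
      rw [hRdef, ContinuousLinearMap.add_apply, inner_add_left, map_add]
    have hbound : ∀ z : H, RCLike.re ⟪R z, z⟫_ℂ ≤ ‖R‖ * ‖z‖^2 := by
      intro z
      calc RCLike.re ⟪R z, z⟫_ℂ ≤ ‖⟪R z, z⟫_ℂ‖ := RCLike.re_le_norm _
      _ ≤ ‖R z‖ * ‖z‖ := norm_inner_le_norm _ _
      _ ≤ (‖R‖ * ‖z‖) * ‖z‖ := by
            exact mul_le_mul_of_nonneg_right (le_opNorm R z) (norm_nonneg z)
      _ = ‖R‖ * ‖z‖^2 := by ring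
    have hfin : Real.sqrt (aS + aT) * Real.sqrt (bS + bT)
        ≤ ‖R‖ * (‖x‖ * ‖y‖) := by
      have h1 : Real.sqrt (aS + aT) ≤ Real.sqrt (‖R‖ * ‖x‖^2) :=
        Real.sqrt_le_sqrt (hRx ▸ hbound x)
      have h2 : Real.sqrt (bS + bT) ≤ Real.sqrt (‖R‖ * ‖y‖^2) :=
        Real.sqrt_le_sqrt (hRy ▸ hbound y)
      have h3 : Real.sqrt (‖R‖ * ‖x‖^2) * Real.sqrt (‖R‖ * ‖y‖^2) = ‖R‖ * (‖x‖ * ‖y‖) := by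
        rw [← Real.sqrt_mul (by positivity)]
        rw [show ‖R‖ * ‖x‖^2 * (‖R‖ * ‖y‖^2) = (‖R‖ * (‖x‖ * ‖y‖))^2 by ring]
        exact Real.sqrt_sq (by positivity)
      calc Real.sqrt (aS + aT) * Real.sqrt (bS + bT)
          ≤ Real.sqrt (‖R‖ * ‖x‖^2) * Real.sqrt (‖R‖ * ‖y‖^2) :=
            mul_le_mul h1 h2 (Real.sqrt_nonneg _) (Real.sqrt_nonneg _)
      _ = ‖R‖ * (‖x‖ * ‖y‖) := h3
    exact hsum1.trans (hcs2.trans hfin)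
  refine ContinuousLinearMap.opNorm_le_bound _ (norm_nonneg R) fun x => ?_
  set v := (S + T) x with hv
  have h1 : ‖v‖^2 ≤ ‖R‖ * ‖x‖ * ‖v‖ := by
    calc ‖v‖^2 = RCLike.re ⟪v, v⟫_ℂ := (inner_self_eq_norm_sq (𝕜 := ℂ) v).symm
    _ ≤ ‖⟪v, v⟫_ℂ‖ := RCLike.re_le_norm _
    _ = ‖⟪(S + T) x, v⟫_ℂ‖ := rfl
    _ ≤ ‖R‖ * (‖x‖ * ‖v‖) := hkey x v
    _ = ‖R‖ * ‖x‖ * ‖v‖ := by ring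
  rcases eq_or_lt_of_le (norm_nonneg v) with h0 | h0
  · rw [← h0]; positivity
  · nlinarith
end

section
/- If S and T are positive bounded operators on a complex Hilbert space, then ‖S + T‖ ≤ max{‖S‖, ‖T‖} + ‖ST‖^{1/2}. -/
open scoped InnerProductSpace
variable {H : Type*} [NormedAddCommGroup H] [InnerProductSpace ℂ H] [CompleteSpace H]

open ContinuousLinearMap in
lemma aux_inv (P : H →L[ℂ] H) (hP : P.IsPositive) {r : ℝ} (hr : ‖P‖ < r) :
    ∃ u : (H →L[ℂ] H)ˣ, (u : H →L[ℂ] H) = algebraMap ℝ (H →L[ℂ] H) r - P ∧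
      ‖((u⁻¹ : (H →L[ℂ] H)ˣ) : H →L[ℂ] H)‖ ≤ (r - ‖P‖)⁻¹ := by
  set f : H →L[ℂ] H := algebraMap ℝ (H →L[ℂ] H) r - P with hf
  set c : NNReal := ⟨r - ‖P‖, by linarith [norm_nonneg P]⟩ with hc
  have hc0 : 0 < c := by
    rw [← NNReal.coe_lt_coe]
    exact sub_pos.mpr hr
  have key : ∀ x : H, ‖x‖ ^ 2 * c ≤ ‖⟪f x, x⟫_ℂ‖ := by
    intro x
    have hfx : f x = (r : ℂ) • x - P x := by
      simp [hf, Algebra.algebraMap_eq_smul_one, sub_apply, smul_apply]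
    have h1 : RCLike.re ⟪f x, x⟫_ℂ = r * ‖x‖ ^ 2 - RCLike.re ⟪P x, x⟫_ℂ := by
      have h0 : (⟪x, x⟫_ℂ).re = ‖x‖ ^ 2 := by
        rw [← RCLike.re_to_complex]; exact inner_self_eq_norm_sq x
      rw [hfx, inner_sub_left, map_sub, inner_smul_left, Complex.conj_ofReal]
      norm_num [Complex.re_ofReal_mul]
      exact Or.inl (by rw [← Complex.ofReal_pow, Complex.ofReal_re])
    have h2 : RCLike.re ⟪P x, x⟫_ℂ ≤ ‖P‖ * ‖x‖ ^ 2 := by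
      calc RCLike.re ⟪P x, x⟫_ℂ ≤ ‖⟪P x, x⟫_ℂ‖ := RCLike.re_le_norm _
        _ ≤ ‖P x‖ * ‖x‖ := norm_inner_le_norm _ _
        _ ≤ ‖P‖ * ‖x‖ * ‖x‖ := by
            gcongr
            exact P.le_opNorm x
        _ = ‖P‖ * ‖x‖ ^ 2 := by ring
    calc ‖x‖ ^ 2 * c = (r - ‖P‖) * ‖x‖ ^ 2 := by show ‖x‖ ^ 2 * (r - ‖P‖) = _; ring
      _ ≤ RCLike.re ⟪f x, x⟫_ℂ := by rw [h1]; nlinarith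
      _ ≤ ‖⟪f x, x⟫_ℂ‖ := RCLike.re_le_norm _
  have hu : IsUnit f := isUnit_of_forall_le_norm_inner_map f hc0 key
  have hanti : AntilipschitzWith c⁻¹ f := antilipschitz_of_forall_le_inner_map f hc0 key
  refine ⟨hu.unit, hu.unit_spec, ?_⟩
  refine opNorm_le_bound _ (inv_nonneg.mpr (by linarith)) fun y => ?_
  have h3 : f (((hu.unit⁻¹ : _) : H →L[ℂ] H) y) = y := by
    have : f * ((hu.unit⁻¹ : _) : H →L[ℂ] H) = 1 := by
      simpa [hu.unit_spec] using hu.unit.mul_inv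
    calc f (((hu.unit⁻¹ : _) : H →L[ℂ] H) y)
        = (f * ((hu.unit⁻¹ : _) : H →L[ℂ] H)) y := rfl
      _ = y := by rw [this]; rfl
  have h4 := hanti.le_mul_dist (((hu.unit⁻¹ : _) : H →L[ℂ] H) y) 0
  simp only [map_zero, dist_zero_right, h3] at h4
  have hcc : ((c⁻¹ : NNReal) : ℝ) = (r - ‖P‖)⁻¹ := by
    rw [NNReal.coe_inv]; rfl
  rw [hcc] at h4
  exact h4

theorem norm_add_le_max_add_sqrt_norm_mul (S T : H →L[ℂ] H)
    (hS : 0 ≤ S) (hT : 0 ≤ T) :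
    ‖S + T‖ ≤ max ‖S‖ ‖T‖ + Real.sqrt ‖S * T‖ := by
  set M := max ‖S‖ ‖T‖ + Real.sqrt ‖S * T‖ with hM
  have hsq : 0 ≤ Real.sqrt ‖S * T‖ := Real.sqrt_nonneg _
  have hM0 : 0 ≤ M := by
    have := norm_nonneg S
    have := le_max_left ‖S‖ ‖T‖
    linarith
  by_contra hcon
  push_neg at hcon
  set r := ‖S + T‖ with hr
  have hST : (0 : H →L[ℂ] H) ≤ S + T := add_nonneg hS hT
  have hsa : IsSelfAdjoint (S + T) := .of_nonneg hST
  have hNT : Nontrivial H := by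
    by_contra h
    rw [not_nontrivial_iff_subsingleton] at h
    have : S + T = 0 := Subsingleton.elim _ _
    rw [hr, this, norm_zero] at hcon
    linarith
  have hmem : r ∈ spectrum ℝ (S + T) := by
    rcases CStarAlgebra.norm_or_neg_norm_mem_spectrum (a := S + T) hsa with h | h
    · exact h
    · exfalso
      have h0 := spectrum_nonneg_of_nonneg hST h
      have := norm_nonneg (S + T)
      rw [← hr] at this
      linarith
  -- now show r ∉ spectrum: contradiction
  have hSr : ‖S‖ < r := by
    have := le_max_left ‖S‖ ‖T‖; linarith
  have hTr : ‖T‖ < r := by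
    have := le_max_right ‖S‖ ‖T‖; linarith
  have hsqS : Real.sqrt ‖S * T‖ < r - ‖S‖ := by
    have := le_max_left ‖S‖ ‖T‖; linarith
  have hsqT : Real.sqrt ‖S * T‖ < r - ‖T‖ := by
    have := le_max_right ‖S‖ ‖T‖; linarith
  obtain ⟨u, hu, hui⟩ := aux_inv S ((ContinuousLinearMap.nonneg_iff_isPositive S).mp hS) hSr
  obtain ⟨v, hv, hvi⟩ := aux_inv T ((ContinuousLinearMap.nonneg_iff_isPositive T).mp hT) hTr
  set z : H →L[ℂ] H := algebraMap ℝ (H →L[ℂ] H) r with hz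
  set w : H →L[ℂ] H := (↑u⁻¹ : H →L[ℂ] H) * (S * T) * (↑v⁻¹ : H →L[ℂ] H) with hw
  have hwnorm : ‖w‖ < 1 := by
    have hb : ‖w‖ ≤ (r - ‖S‖)⁻¹ * ‖S * T‖ * (r - ‖T‖)⁻¹ := by
      calc ‖w‖ ≤ ‖(↑u⁻¹ : H →L[ℂ] H) * (S * T)‖ * ‖(↑v⁻¹ : H →L[ℂ] H)‖ := norm_mul_le _ _
        _ ≤ ‖(↑u⁻¹ : H →L[ℂ] H)‖ * ‖S * T‖ * ‖(↑v⁻¹ : H →L[ℂ] H)‖ := by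
            gcongr; exact norm_mul_le _ _
        _ ≤ (r - ‖S‖)⁻¹ * ‖S * T‖ * (r - ‖T‖)⁻¹ := by
            have h01 : (0:ℝ) ≤ (r - ‖S‖)⁻¹ := inv_nonneg.mpr (by linarith)
            have h02 : (0:ℝ) ≤ (r - ‖T‖)⁻¹ := inv_nonneg.mpr (by linarith)
            exact mul_le_mul (mul_le_mul hui le_rfl (norm_nonneg _) h01) hvi
              (norm_nonneg _) (mul_nonneg h01 (norm_nonneg _))
    have hlt : ‖S * T‖ < (r - ‖S‖) * (r - ‖T‖) := by
      have := Real.mul_self_sqrt (norm_nonneg (S * T))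
      nlinarith
    have hbd : (r - ‖S‖)⁻¹ * ‖S * T‖ * (r - ‖T‖)⁻¹ < 1 := by
      rw [mul_comm ((r - ‖S‖)⁻¹) (‖S * T‖), mul_assoc, ← mul_inv]
      rw [mul_inv_lt_iff₀ (by nlinarith), one_mul]
      exact hlt
    linarith
  have hmidunit : IsUnit (1 - w) := isUnit_one_sub_of_norm_lt_one hwnorm
  have hprod : IsUnit ((↑u : H →L[ℂ] H) * (1 - w) * (↑v : H →L[ℂ] H)) :=
    (u.isUnit.mul hmidunit).mul v.isUnit
  have hkey : (↑u : H →L[ℂ] H) * (1 - w) * (↑v : H →L[ℂ] H) = z * (z - (S + T)) := by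
    have e1 : (↑u : H →L[ℂ] H) * (1 - w) * (↑v : H →L[ℂ] H) = (↑u : H →L[ℂ] H) * (↑v : H →L[ℂ] H) - S * T := by
      have : (↑u : H →L[ℂ] H) * w = (S * T) * (↑v⁻¹ : H →L[ℂ] H) := by
        rw [hw, ← mul_assoc, ← mul_assoc, u.mul_inv, one_mul]
      rw [mul_sub, mul_one, this, sub_mul, mul_assoc, v.inv_mul, mul_one]
    have hcs : S * z = z * S := (Algebra.commutes r S).symm
    have L : (z - S) * (z - T) - S * T = z * z - S * z - z * T := by
      rw [sub_mul, mul_sub, mul_sub]; abel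
    have R : z * (z - (S + T)) = z * z - z * S - z * T := by
      rw [mul_sub, mul_add]; abel
    rw [e1, hu, hv, L, R, hcs]
  have hzU : IsUnit z := by
    have hr0 : r ≠ 0 := by linarith
    exact (isUnit_iff_ne_zero.mpr hr0).map (algebraMap ℝ (H →L[ℂ] H))
  have hfin : IsUnit (z - (S + T)) := by
    have h2 : z - (S + T) = (↑hzU.unit⁻¹ : H →L[ℂ] H) * ((↑u : H →L[ℂ] H) * (1 - w) * (↑v : H →L[ℂ] H)) := by
      rw [hkey, ← mul_assoc]
      have : (↑hzU.unit⁻¹ : H →L[ℂ] H) * z = 1 := by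
        simpa [hzU.unit_spec] using hzU.unit.inv_mul
      rw [this, one_mul]
    rw [h2]
    exact (hzU.unit⁻¹).isUnit.mul hprod
  exact spectrum.mem_iff.mp hmem hfin
end

section
/- If S and T are bounded operators on a complex Hilbert space such that the product ST is self-adjoint, then ‖ST‖ ≤ ‖Re(TS)‖, where Re(X) = (X + X*)/2. -/
open scoped InnerProductSpace NNReal
open ContinuousLinearMap Complex

variable {H : Type*} [NormedAddCommGroup H] [InnerProductSpace ℂ H] [CompleteSpace H]

lemma re_inner_le (B : H →L[ℂ] H) (x : H) :
    Complex.re ⟪B x, x⟫_ℂ ≤ ‖(2 : ℂ)⁻¹ • (B + star B)‖ * ‖x‖ ^ 2 := by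
  set R := (2 : ℂ)⁻¹ • (B + star B) with hR
  have h0 : ⟪(star B) x, x⟫_ℂ = starRingEnd ℂ ⟪B x, x⟫_ℂ := by
    rw [star_eq_adjoint, adjoint_inner_left, ← inner_conj_symm]
  have h1 : ⟪R x, x⟫_ℂ = (Complex.re ⟪B x, x⟫_ℂ : ℂ) := by
    rw [hR]
    simp only [smul_apply, add_apply, inner_smul_left, inner_add_left, h0, map_inv₀,
      Complex.conj_ofNat, Complex.add_conj]
    push_cast
    ring
  calc Complex.re ⟪B x, x⟫_ℂ = Complex.re ⟪R x, x⟫_ℂ := by rw [h1]; simp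
    _ ≤ ‖⟪R x, x⟫_ℂ‖ := by simpa using RCLike.re_le_norm (K := ℂ) ⟪R x, x⟫_ℂ
    _ ≤ ‖R x‖ * ‖x‖ := norm_inner_le_norm _ _
    _ ≤ ‖R‖ * ‖x‖ * ‖x‖ := by
        have := R.le_opNorm x
        have h2 : (0:ℝ) ≤ ‖x‖ := norm_nonneg _
        nlinarith
    _ = ‖R‖ * ‖x‖ ^ 2 := by ring

lemma real_spectrum_le (B : H →L[ℂ] H) (c : ℝ) (hc : (c : ℂ) ∈ spectrum ℂ B) :
    c ≤ ‖(2 : ℂ)⁻¹ • (B + star B)‖ := by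
  by_contra! hlt
  set R := (2 : ℂ)⁻¹ • (B + star B) with hR
  set δ : ℝ≥0 := ⟨c - ‖R‖, by linarith [norm_nonneg R]⟩ with hδ
  have hδpos : 0 < δ := by
    rw [← NNReal.coe_pos]
    simp only [hδ, NNReal.coe_mk]
    change (0:ℝ) < c - ‖R‖
    linarith
  have : IsUnit (algebraMap ℂ (H →L[ℂ] H) c - B) := by
    apply isUnit_of_forall_le_norm_inner_map _ hδpos
    intro x
    have key : ⟪(algebraMap ℂ (H →L[ℂ] H) c - B) x, x⟫_ℂ
        = (c : ℂ) * (‖x‖ ^ 2 : ℝ) - ⟪B x, x⟫_ℂ := by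
      rw [ContinuousLinearMap.sub_apply, inner_sub_left, Algebra.algebraMap_eq_smul_one]
      simp only [ContinuousLinearMap.smul_apply, ContinuousLinearMap.one_apply]
      rw [inner_smul_left, inner_self_eq_norm_sq_to_K]
      simp [Complex.conj_ofReal]
    have hre : (c - ‖R‖) * ‖x‖ ^ 2 ≤ Complex.re ⟪(algebraMap ℂ (H →L[ℂ] H) c - B) x, x⟫_ℂ := by
      rw [key]
      have hri := re_inner_le B x
      rw [← hR] at hri
      simp only [Complex.sub_re, Complex.mul_re, Complex.ofReal_re, Complex.ofReal_im]
      nlinarith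
    calc ‖x‖ ^ 2 * (δ : ℝ) = (c - ‖R‖) * ‖x‖ ^ 2 := by
          simp only [hδ, NNReal.coe_mk]; change ‖x‖ ^ 2 * (c - ‖R‖) = _; ring
      _ ≤ Complex.re ⟪(algebraMap ℂ (H →L[ℂ] H) c - B) x, x⟫_ℂ := hre
      _ ≤ ‖⟪(algebraMap ℂ (H →L[ℂ] H) c - B) x, x⟫_ℂ‖ := by simpa using RCLike.re_le_norm (K := ℂ) ⟪(algebraMap ℂ (H →L[ℂ] H) ↑c - B) x, x⟫_ℂ
  exact (spectrum.mem_iff.mp hc) this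

theorem norm_mul_le_norm_re_of_isSelfAdjoint (S T : H →L[ℂ] H)
    (h : IsSelfAdjoint (S * T)) :
    ‖S * T‖ ≤ ‖(2 : ℂ)⁻¹ • (T * S + star (T * S))‖ := by
  rcases eq_or_lt_of_le (norm_nonneg (S * T)) with h0 | h0
  · rw [← h0]; exact norm_nonneg _
  haveI : Nontrivial (H →L[ℂ] H) :=
    ⟨⟨S * T, 0, fun he => by rw [he] at h0; simp at h0⟩⟩
  obtain ⟨z, hz, hznorm⟩ := spectrum.exists_nnnorm_eq_spectralRadius (S * T)
  rw [h.spectralRadius_eq_nnnorm] at hznorm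
  have hzn : ‖z‖ = ‖S * T‖ := by exact_mod_cast congrArg ENNReal.toReal hznorm
  have hzre : z = z.re := h.mem_spectrum_eq_re hz
  have hz0 : z ≠ 0 := by
    intro he; rw [he, norm_zero] at hzn; exact h0.ne hzn
  have hz' : z ∈ spectrum ℂ (T * S) := by
    have hswap := spectrum.nonzero_mul_comm (𝕜 := ℂ) S T
    have : z ∈ spectrum ℂ (T * S) \ {0} := hswap ▸ ⟨hz, hz0⟩
    exact this.1
  have h1 : z.re ≤ ‖(2 : ℂ)⁻¹ • (T * S + star (T * S))‖ :=
    real_spectrum_le (T * S) z.re (by rw [← hzre]; exact hz')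
  have h2 : -z.re ≤ ‖(2 : ℂ)⁻¹ • (T * S + star (T * S))‖ := by
    have hneg : ((-z.re : ℝ) : ℂ) ∈ spectrum ℂ (-(T * S)) := by
      rw [← spectrum.neg_eq]
      push_cast
      rw [← hzre]
      exact Set.neg_mem_neg.mpr hz'
    have := real_spectrum_le (-(T * S)) (-z.re) hneg
    have heq : (2 : ℂ)⁻¹ • (-(T * S) + star (-(T * S)))
        = -((2 : ℂ)⁻¹ • (T * S + star (T * S))) := by
      rw [star_neg, ← neg_add, smul_neg]
    rwa [heq, norm_neg] at this
  have habs : ‖S * T‖ = |z.re| := by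
    rw [← hzn, hzre]
    simp [Complex.norm_real]
  rw [habs]
  rcases abs_cases z.re with ⟨he, _⟩ | ⟨he, _⟩ <;> rw [he] <;> [exact h1; exact h2]
end

section
/- Let S and T be positive bounded operators on a complex Hilbert space and f₁, f₂, g₁, g₂ nonnegative continuous functions on [0,∞) with f₁(x)f₂(x) = x and g₁(x)g₂(x) = x for all x ≥ 0. Then for every t > 0, ‖S + T‖ ≤ (1/2)(‖S‖ + ‖T‖) + (1/2)√((‖S‖ − ‖T‖)² + ‖(1/t) f₁(S)g₁(T) + t f₂(S)g₂(T)‖²). -/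
open scoped InnerProductSpace
variable {H : Type*} [NormedAddCommGroup H] [InnerProductSpace ℂ H] [CompleteSpace H]

private theorem scalar_cs (a b r p q : ℝ) :
    a * p ^ 2 + b * q ^ 2 + r * (p * q) ≤
      (1 / 2 * (a + b) + 1 / 2 * Real.sqrt ((a - b) ^ 2 + r ^ 2)) * (p ^ 2 + q ^ 2) := by
  set w := Real.sqrt ((a - b) ^ 2 + r ^ 2) with hw
  have hw0 : 0 ≤ w := Real.sqrt_nonneg _
  have hw2 : w ^ 2 = (a - b) ^ 2 + r ^ 2 := Real.sq_sqrt (by positivity)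
  set Y := (a - b) * (p^2 - q^2) + 2*r*(p*q) with hY
  set Z := w * (p^2 + q^2) with hZ
  have hZ0 : 0 ≤ Z := by positivity
  have h1 : Y^2 ≤ Z^2 := by
    have lag : Y^2 + (r*(p^2-q^2) - 2*(p*q)*(a-b))^2 = Z^2 := by
      rw [hY, hZ]; linear_combination (-(p^2+q^2)^2) * hw2
    nlinarith [sq_nonneg (r*(p^2-q^2) - 2*(p*q)*(a-b))]
  have h2 : Y ≤ Z := by nlinarith [sq_nonneg (Y - Z), sq_nonneg (Y + Z)]
  nlinarith [h2]

private theorem re_inner_ge {w u : H} : -(‖w‖ * ‖u‖) ≤ RCLike.re ⟪w, u⟫_ℂ := by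
  have := re_inner_le_norm (𝕜 := ℂ) (-w) u
  simp only [inner_neg_left, map_neg, norm_neg] at this
  linarith

set_option maxHeartbeats 2000000 in
theorem norm_add_le_of_positive_cfc (S T : H →L[ℂ] H) (hS : 0 ≤ S) (hT : 0 ≤ T)
    (t : ℝ) (ht : 0 < t) (f₁ f₂ g₁ g₂ : ℝ → ℝ)
    (hf₁ : ContinuousOn f₁ (Set.Ici 0)) (hf₂ : ContinuousOn f₂ (Set.Ici 0))
    (hg₁ : ContinuousOn g₁ (Set.Ici 0)) (hg₂ : ContinuousOn g₂ (Set.Ici 0))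
    (hf₁0 : ∀ x ≥ (0 : ℝ), 0 ≤ f₁ x) (hf₂0 : ∀ x ≥ (0 : ℝ), 0 ≤ f₂ x)
    (hg₁0 : ∀ x ≥ (0 : ℝ), 0 ≤ g₁ x) (hg₂0 : ∀ x ≥ (0 : ℝ), 0 ≤ g₂ x)
    (hf : ∀ x ≥ (0 : ℝ), f₁ x * f₂ x = x) (hg : ∀ x ≥ (0 : ℝ), g₁ x * g₂ x = x) :
    ‖S + T‖ ≤ (1 / 2) * (‖S‖ + ‖T‖) + (1 / 2) * Real.sqrt ((‖S‖ - ‖T‖) ^ 2 +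
      ‖t⁻¹ • (cfc f₁ S * cfc g₁ T) + t • (cfc f₂ S * cfc g₂ T)‖ ^ 2) := by
  by_contra hcon
  push_neg at hcon
  set F1 := cfc f₁ S with hF1def
  set F2 := cfc f₂ S with hF2def
  set G1 := cfc g₁ T with hG1def
  set G2 := cfc g₂ T with hG2def
  set C := t⁻¹ • (F1 * G1) + t • (F2 * G2) with hCdef
  set a := ‖S‖ with ha
  set b := ‖T‖ with hb
  set r := ‖C‖ with hr
  set P := S + T with hPdef
  set l := ‖P‖ with hl
  set c := (1 / 2) * (a + b) + (1 / 2) * Real.sqrt ((a - b) ^ 2 + r ^ 2) with hc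
  clear_value a b r l c
  -- basic positivity
  have hc0 : 0 ≤ c := by rw [hc, ha, hb]; positivity
  have hlc : c < l := hcon
  have hl0 : 0 < l := hc0.trans_lt hlc
  have hlc0 : 0 < l - c := sub_pos.mpr hlc
  have hP : (0 : H →L[ℂ] H) ≤ P := add_nonneg hS hT
  -- cfc identities
  have hspecS : spectrum ℝ S ⊆ Set.Ici 0 := fun x hx => spectrum_nonneg_of_nonneg hS hx
  have hspecT : spectrum ℝ T ⊆ Set.Ici 0 := fun x hx => spectrum_nonneg_of_nonneg hT hx
  have hSsa : IsSelfAdjoint S := .of_nonneg hS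
  have hTsa : IsSelfAdjoint T := .of_nonneg hT
  have hF12 : F1 * F2 = S := by
    rw [hF1def, hF2def, ← cfc_mul f₁ f₂ S (hf₁.mono hspecS) (hf₂.mono hspecS),
      cfc_congr (g := id) (fun x hx => hf x (hspecS hx)), cfc_id ℝ S]
  have hF21 : F2 * F1 = S := by
    rw [hF1def, hF2def, ← cfc_mul f₂ f₁ S (hf₂.mono hspecS) (hf₁.mono hspecS),
      cfc_congr (g := id) (fun x hx => (mul_comm (f₂ x) (f₁ x)).trans (hf x (hspecS hx))),
      cfc_id ℝ S]
  have hG12 : G1 * G2 = T := by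
    rw [hG1def, hG2def, ← cfc_mul g₁ g₂ T (hg₁.mono hspecT) (hg₂.mono hspecT),
      cfc_congr (g := id) (fun x hx => hg x (hspecT hx)), cfc_id ℝ T]
  have hG21 : G2 * G1 = T := by
    rw [hG1def, hG2def, ← cfc_mul g₂ g₁ T (hg₂.mono hspecT) (hg₁.mono hspecT),
      cfc_congr (g := id) (fun x hx => (mul_comm (g₂ x) (g₁ x)).trans (hg x (hspecT hx))),
      cfc_id ℝ T]
  have hF1sa : IsSelfAdjoint F1 := cfc_predicate f₁ S
  have hF2sa : IsSelfAdjoint F2 := cfc_predicate f₂ S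
  have hG1sa : IsSelfAdjoint G1 := cfc_predicate g₁ T
  have hG2sa : IsSelfAdjoint G2 := cfc_predicate g₂ T
  clear_value F1 F2 G1 G2
  -- constants
  set D := ‖F1‖ + t * ‖G2‖ with hD
  set E := ‖F2‖ + t⁻¹ * ‖G1‖ with hE
  have hE0 : 0 ≤ E := by positivity
  have hD0 : 0 < D := by
    rcases lt_or_ge 0 D with h | h
    · exact h
    · exfalso
      have n1 := norm_nonneg F1
      have n2 := norm_nonneg G2
      have hg2 : 0 ≤ t * ‖G2‖ := mul_nonneg ht.le n2
      rw [hD] at h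
      have h1 : ‖F1‖ = 0 := le_antisymm (by linarith only [h, hg2]) n1
      have h2 : ‖G2‖ = 0 := by
        have : t * ‖G2‖ ≤ 0 := by linarith only [h, n1]
        have h2' : t * ‖G2‖ = 0 := le_antisymm this hg2
        rcases mul_eq_zero.mp h2' with h' | h'
        · exact absurd h' ht.ne'
        · exact h'
      have hS0 : S = 0 := by rw [← hF12, norm_eq_zero.mp h1, zero_mul]
      have hT0 : T = 0 := by rw [← hG21, norm_eq_zero.mp h2, zero_mul]
      rw [hl, hPdef, hS0, hT0, add_zero, norm_zero] at hl0
      exact lt_irrefl 0 hl0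
  clear_value D E
  -- sqrt of P
  have hspecP : spectrum ℝ P ⊆ Set.Ici 0 := fun x hx => spectrum_nonneg_of_nonneg hP hx
  have hPsa : IsSelfAdjoint P := .of_nonneg hP
  set Q := cfc Real.sqrt P with hQdef
  have hQ2 : Q * Q = P := by
    rw [hQdef, ← cfc_mul Real.sqrt Real.sqrt P
        (Real.continuous_sqrt.continuousOn) (Real.continuous_sqrt.continuousOn),
      cfc_congr (f := fun x => Real.sqrt x * Real.sqrt x) (g := id) (fun x hx => Real.mul_self_sqrt (hspecP hx)), cfc_id ℝ P]
  have hQsa : IsSelfAdjoint Q := cfc_predicate Real.sqrt P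
  have hQnorm : ‖Q‖ * ‖Q‖ = l := by
    calc ‖Q‖ * ‖Q‖ = ‖star Q * Q‖ := (CStarRing.norm_star_mul_self).symm
      _ = l := by rw [hQsa.star_eq, hQ2, hl]
  clear_value Q C P
  -- choice of δ
  set K := ((l - c) * (l / 2) ^ 2) ^ 2 with hK
  set M := E * D * l with hM
  have hK0 : 0 < K := by
    rw [hK]
    have w : 0 < (l - c) * (l / 2) ^ 2 :=
      mul_pos hlc0 (pow_pos (by linarith only [hl0]) 2)
    exact pow_pos w 2
  have hM0 : 0 ≤ M := by
    rw [hM]; exact mul_nonneg (mul_nonneg hE0 hD0.le) hl0.le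
  set δ := min (l / 2) (K / (4 * l * (M ^ 2 + 1))) with hδ
  have hδ0 : 0 < δ :=
    lt_min (by linarith only [hl0])
      (div_pos hK0 (by nlinarith only [hl0, sq_nonneg M]))
  have hδl : δ ≤ l / 2 := min_le_left _ _
  have hδK : δ ≤ K / (4 * l * (M ^ 2 + 1)) := min_le_right _ _
  clear_value K M δ
  -- choose an almost-norming vector
  obtain ⟨x, hx⟩ : ∃ x : H, (l - δ) * ‖x‖ < ‖P x‖ := by
    by_contra hall
    push_neg at hall
    have hob : ‖P‖ ≤ l - δ := P.opNorm_le_bound (by linarith only [hδl, hδ0, hl0]) hall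
    rw [← hl] at hob
    linarith only [hob, hδ0]
  have hx0 : x ≠ 0 := by
    rintro rfl
    simp only [map_zero, norm_zero, mul_zero] at hx
    exact lt_irrefl 0 hx
  set y := ‖x‖⁻¹ • x with hy
  have hxn : 0 < ‖x‖ := norm_pos_iff.mpr hx0
  clear_value y
  have hy1 : ‖y‖ = 1 := by
    rw [hy, norm_smul, Real.norm_of_nonneg (by positivity), inv_mul_cancel₀ hxn.ne']
  have hPy1 : l - δ < ‖P y‖ := by
    have : P y = ‖x‖⁻¹ • P x := by rw [hy, ContinuousLinearMap.map_smul_of_tower]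
    rw [this, norm_smul, Real.norm_of_nonneg (by positivity)]
    calc l - δ = ((l - δ) * ‖x‖) * ‖x‖⁻¹ := by field_simp
      _ < ‖P x‖ * ‖x‖⁻¹ := by
          exact mul_lt_mul_of_pos_right hx (by positivity)
      _ = ‖x‖⁻¹ * ‖P x‖ := mul_comm _ _
  have hPyl : ‖P y‖ ≤ l := by
    calc ‖P y‖ ≤ ‖P‖ * ‖y‖ := P.le_opNorm y
      _ = l := by rw [hy1, mul_one, hl]
  set s := RCLike.re ⟪P y, y⟫_ℂ with hs
  clear_value s
  have hsQ : s = ‖Q y‖ ^ 2 := by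
    have h1 : P y = Q (Q y) := by rw [← hQ2]; rfl
    have h2 : ⟪Q (Q y), y⟫_ℂ = ⟪Q y, Q y⟫_ℂ := hQsa.isSymmetric (Q y) y
    rw [hs, h1, h2]
    exact inner_self_eq_norm_sq (𝕜 := ℂ) (Q y)
  have hsl : s ≤ l := by
    rw [hs]
    calc RCLike.re ⟪P y, y⟫_ℂ ≤ ‖P y‖ * ‖y‖ := re_inner_le_norm _ _
      _ ≤ l := by rw [hy1, mul_one]; exact hPyl
  have hs0 : 0 ≤ s := by rw [hsQ]; positivity
  have hls : (l - δ) ^ 2 ≤ l * s := by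
    have h1 : ‖P y‖ ≤ ‖Q‖ * ‖Q y‖ := by
      have hh : P y = Q (Q y) := by rw [← hQ2]; rfl
      rw [hh]; exact Q.le_opNorm (Q y)
    have h2 : ‖P y‖ ^ 2 ≤ (‖Q‖ * ‖Q‖) * ‖Q y‖ ^ 2 := by
      nlinarith only [h1, norm_nonneg (P y), norm_nonneg Q, norm_nonneg (Q y)]
    have h3 : (l - δ) ^ 2 ≤ ‖P y‖ ^ 2 :=
      pow_le_pow_left₀ (by linarith only [hδl, hl0]) hPy1.le 2
    rw [hQnorm, ← hsQ] at h2
    linarith only [h2, h3]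
  -- approximate eigenvector error
  set e := P y - l • y with he
  set ε := ‖e‖ with hε
  clear_value e ε
  have hε0 : 0 ≤ ε := by rw [hε]; positivity
  have smre : ∀ (rr : ℝ) (w z : H), RCLike.re ⟪rr • w, z⟫_ℂ = rr * RCLike.re ⟪w, z⟫_ℂ := by
    intro rr w z
    rw [RCLike.real_smul_eq_coe_smul (K := ℂ), inner_smul_real_left, RCLike.smul_re]
  have smre' : ∀ (rr : ℝ) (w z : H), RCLike.re ⟪w, rr • z⟫_ℂ = rr * RCLike.re ⟪w, z⟫_ℂ := by
    intro rr w z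
    rw [RCLike.real_smul_eq_coe_smul (K := ℂ), inner_smul_real_right, RCLike.smul_re]
  have hε2 : ε ^ 2 ≤ 4 * l * δ := by
    have h1 : ε ^ 2 = ‖P y‖ ^ 2 - 2 * (l * s) + l ^ 2 := by
      rw [hε, he, norm_sub_sq (𝕜 := ℂ)]
      have h3 : RCLike.re ⟪P y, l • y⟫_ℂ = l * s := by rw [smre', hs]
      have h4 : ‖l • y‖ = l := by
        rw [norm_smul, Real.norm_of_nonneg hl0.le, hy1, mul_one]
      rw [h3, h4]
    nlinarith only [h1, hls, hPyl, norm_nonneg (P y), hδ0, hδl, hl0]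
  -- the two auxiliary vectors
  set u := F2 y with hu
  set v := G1 y with hv
  set p := ‖u‖ with hp
  set q := t⁻¹ * ‖v‖ with hq
  clear_value p q
  have hp0 : 0 ≤ p := by rw [hp]; positivity
  have hq0 : 0 ≤ q := by
    rw [hq]; exact mul_nonneg (inv_nonneg.mpr ht.le) (norm_nonneg _)
  set m := Real.sqrt (p ^ 2 + q ^ 2) with hm
  clear_value m
  have hm0 : 0 ≤ m := by rw [hm]; positivity
  have hm2 : m ^ 2 = p ^ 2 + q ^ 2 := by
    rw [hm]; exact Real.sq_sqrt (by positivity)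
  have hpm : p ≤ m := by nlinarith only [hm2, hp0, hm0, sq_nonneg q]
  have hqm : q ≤ m := by nlinarith only [hm2, hq0, hm0, sq_nonneg p]
  -- operator identities
  have e1 : F2 * S = S * F2 := by rw [← hF12, ← mul_assoc, hF21, hF12]
  have e2 : F2 * T = (F2 * G2) * G1 := by rw [← hG21, ← mul_assoc]
  have e3 : G1 * S = (G1 * F1) * F2 := by rw [← hF12, ← mul_assoc]
  have e4 : G1 * T = T * G1 := by
    conv_lhs => rw [← hG21]
    conv_rhs => rw [← hG12]
    rw [mul_assoc]
  have key1 : F2 (P y) = S u + (F2 * G2) v := by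
    calc F2 (P y) = F2 (S y + T y) := by rw [hPdef]; rfl
      _ = F2 (S y) + F2 (T y) := map_add F2 _ _
      _ = (F2 * S) y + (F2 * T) y := rfl
      _ = (S * F2) y + ((F2 * G2) * G1) y := by rw [e1, e2]
      _ = S u + (F2 * G2) v := rfl
  have key2 : G1 (P y) = (G1 * F1) u + T v := by
    calc G1 (P y) = G1 (S y + T y) := by rw [hPdef]; rfl
      _ = G1 (S y) + G1 (T y) := map_add G1 _ _
      _ = (G1 * S) y + (G1 * T) y := rfl
      _ = ((G1 * F1) * F2) y + (T * G1) y := by rw [e3, e4]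
      _ = (G1 * F1) u + T v := rfl
  set X1 := RCLike.re ⟪F2 (P y), u⟫_ℂ with hX1
  set X2 := RCLike.re ⟪G1 (P y), v⟫_ℂ with hX2
  clear_value X1 X2
  -- upper bound on X1 + t⁻² X2
  have c1 : RCLike.re ⟪S u, u⟫_ℂ ≤ a * p ^ 2 := by
    rw [ha]
    calc RCLike.re ⟪S u, u⟫_ℂ ≤ ‖S u‖ * ‖u‖ := re_inner_le_norm _ _
      _ ≤ (‖S‖ * ‖u‖) * ‖u‖ :=
        mul_le_mul_of_nonneg_right (S.le_opNorm u) (norm_nonneg u)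
      _ = ‖S‖ * p ^ 2 := by rw [← hp]; ring
  have c2 : RCLike.re ⟪T v, v⟫_ℂ ≤ b * ‖v‖ ^ 2 := by
    rw [hb]
    calc RCLike.re ⟪T v, v⟫_ℂ ≤ ‖T v‖ * ‖v‖ := re_inner_le_norm _ _
      _ ≤ (‖T‖ * ‖v‖) * ‖v‖ :=
        mul_le_mul_of_nonneg_right (T.le_opNorm v) (norm_nonneg v)
      _ = ‖T‖ * ‖v‖ ^ 2 := by ring
  have c3 : RCLike.re ⟪C v, u⟫_ℂ ≤ r * (‖v‖ * p) := by
    rw [hr]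
    calc RCLike.re ⟪C v, u⟫_ℂ ≤ ‖C v‖ * ‖u‖ := re_inner_le_norm _ _
      _ ≤ (‖C‖ * ‖v‖) * ‖u‖ :=
        mul_le_mul_of_nonneg_right (C.le_opNorm v) (norm_nonneg u)
      _ = ‖C‖ * (‖v‖ * p) := by rw [← hp]; ring
  have iX1 : X1 = RCLike.re ⟪S u, u⟫_ℂ + RCLike.re ⟪(F2 * G2) v, u⟫_ℂ := by
    rw [hX1, key1, inner_add_left, map_add]
  have iX2 : X2 = RCLike.re ⟪(G1 * F1) u, v⟫_ℂ + RCLike.re ⟪T v, v⟫_ℂ := by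
    rw [hX2, key2, inner_add_left, map_add]
  have sym : RCLike.re ⟪(G1 * F1) u, v⟫_ℂ = RCLike.re ⟪(F1 * G1) v, u⟫_ℂ := by
    have a1 : ⟪(G1 * F1) u, v⟫_ℂ = ⟪F1 u, G1 v⟫_ℂ := hG1sa.isSymmetric (F1 u) v
    have a2 : ⟪F1 u, G1 v⟫_ℂ = ⟪u, (F1 * G1) v⟫_ℂ := hF1sa.isSymmetric u (G1 v)
    rw [a1, a2]
    exact inner_re_symm u ((F1 * G1) v)
  have reCv : RCLike.re ⟪C v, u⟫_ℂ
      = t⁻¹ * RCLike.re ⟪(F1 * G1) v, u⟫_ℂ + t * RCLike.re ⟪(F2 * G2) v, u⟫_ℂ := by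
    have hCv : C v = t⁻¹ • ((F1 * G1) v) + t • ((F2 * G2) v) := by rw [hCdef]; rfl
    rw [hCv, inner_add_left, map_add, smre, smre]
  have idX : X1 + t⁻¹ * t⁻¹ * X2 = RCLike.re ⟪S u, u⟫_ℂ
      + t⁻¹ * t⁻¹ * RCLike.re ⟪T v, v⟫_ℂ + t⁻¹ * RCLike.re ⟪C v, u⟫_ℂ := by
    rw [iX1, iX2, sym, reCv]
    field_simp
    ring
  have c2' : t⁻¹ * t⁻¹ * RCLike.re ⟪T v, v⟫_ℂ ≤ b * q ^ 2 := by
    have h0 : (0:ℝ) ≤ t⁻¹ * t⁻¹ := by positivity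
    calc t⁻¹ * t⁻¹ * RCLike.re ⟪T v, v⟫_ℂ ≤ t⁻¹ * t⁻¹ * (b * ‖v‖ ^ 2) :=
          mul_le_mul_of_nonneg_left c2 h0
      _ = b * q ^ 2 := by rw [hq]; ring
  have c3' : t⁻¹ * RCLike.re ⟪C v, u⟫_ℂ ≤ r * (p * q) := by
    have h0 : (0:ℝ) ≤ t⁻¹ := by positivity
    calc t⁻¹ * RCLike.re ⟪C v, u⟫_ℂ ≤ t⁻¹ * (r * (‖v‖ * p)) :=
          mul_le_mul_of_nonneg_left c3 h0
      _ = r * (p * q) := by rw [hq]; ring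
  have A1 : X1 + t⁻¹ * t⁻¹ * X2 ≤ a * p ^ 2 + b * q ^ 2 + r * (p * q) := by
    rw [idX]; linarith only [c1, c2', c3']
  -- lower bounds on X1, X2
  have hPye : P y = l • y + e := by rw [he]; abel
  have A2 : l * p ^ 2 - ‖F2‖ * (ε * p) ≤ X1 := by
    have k1 : F2 (P y) = l • u + F2 e := by
      rw [hPye, map_add, ContinuousLinearMap.map_smul_of_tower]
    have k2 : X1 = l * p ^ 2 + RCLike.re ⟪F2 e, u⟫_ℂ := by
      rw [hX1, k1, inner_add_left, map_add, smre, inner_self_eq_norm_sq, ← hp]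
    have k3 : -(‖F2‖ * (ε * p)) ≤ RCLike.re ⟪F2 e, u⟫_ℂ := by
      have k4 := re_inner_ge (w := F2 e) (u := u)
      have k5 : ‖F2 e‖ * ‖u‖ ≤ ‖F2‖ * (ε * p) := by
        calc ‖F2 e‖ * ‖u‖ ≤ (‖F2‖ * ‖e‖) * ‖u‖ :=
              mul_le_mul_of_nonneg_right (F2.le_opNorm e) (norm_nonneg u)
          _ = ‖F2‖ * (ε * p) := by rw [hε, hp]; ring
      linarith only [k4, k5]
    linarith only [k2, k3]
  have A3 : l * ‖v‖ ^ 2 - ‖G1‖ * (ε * ‖v‖) ≤ X2 := by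
    have k1 : G1 (P y) = l • v + G1 e := by
      rw [hPye, map_add, ContinuousLinearMap.map_smul_of_tower]
    have k2 : X2 = l * ‖v‖ ^ 2 + RCLike.re ⟪G1 e, v⟫_ℂ := by
      rw [hX2, k1, inner_add_left, map_add, smre, inner_self_eq_norm_sq]
    have k3 : -(‖G1‖ * (ε * ‖v‖)) ≤ RCLike.re ⟪G1 e, v⟫_ℂ := by
      have k4 := re_inner_ge (w := G1 e) (u := v)
      have k5 : ‖G1 e‖ * ‖v‖ ≤ ‖G1‖ * (ε * ‖v‖) := by
        calc ‖G1 e‖ * ‖v‖ ≤ (‖G1‖ * ‖e‖) * ‖v‖ :=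
              mul_le_mul_of_nonneg_right (G1.le_opNorm e) (norm_nonneg v)
          _ = ‖G1‖ * (ε * ‖v‖) := by rw [hε]; ring
      linarith only [k4, k5]
    linarith only [k2, k3]
  -- lower bound on m via s
  have hsD : s ≤ D * m := by
    have r1 : RCLike.re ⟪S y, y⟫_ℂ ≤ ‖F1‖ * p := by
      have j1 : S y = F1 u := by rw [← hF12]; rfl
      have j2 : ⟪F1 u, y⟫_ℂ = ⟪u, F1 y⟫_ℂ := hF1sa.isSymmetric u y
      rw [j1, j2]
      calc RCLike.re ⟪u, F1 y⟫_ℂ ≤ ‖u‖ * ‖F1 y‖ := re_inner_le_norm _ _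
        _ ≤ ‖u‖ * (‖F1‖ * ‖y‖) :=
          mul_le_mul_of_nonneg_left (F1.le_opNorm y) (norm_nonneg u)
        _ = ‖F1‖ * p := by rw [← hp, hy1]; ring
    have r2 : RCLike.re ⟪T y, y⟫_ℂ ≤ ‖G2‖ * ‖v‖ := by
      have j1 : T y = G2 v := by rw [← hG21]; rfl
      have j2 : ⟪G2 v, y⟫_ℂ = ⟪v, G2 y⟫_ℂ := hG2sa.isSymmetric v y
      rw [j1, j2]
      calc RCLike.re ⟪v, G2 y⟫_ℂ ≤ ‖v‖ * ‖G2 y‖ := re_inner_le_norm _ _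
        _ ≤ ‖v‖ * (‖G2‖ * ‖y‖) :=
          mul_le_mul_of_nonneg_left (G2.le_opNorm y) (norm_nonneg v)
        _ = ‖G2‖ * ‖v‖ := by rw [hy1]; ring
    have r3 : s = RCLike.re ⟪S y, y⟫_ℂ + RCLike.re ⟪T y, y⟫_ℂ := by
      have : P y = S y + T y := by rw [hPdef]; rfl
      rw [hs, this, inner_add_left, map_add]
    have r4 : ‖v‖ = t * q := by rw [hq]; field_simp
    have r5 : ‖F1‖ * p ≤ ‖F1‖ * m := mul_le_mul_of_nonneg_left hpm (norm_nonneg _)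
    have r6 : ‖G2‖ * ‖v‖ ≤ t * ‖G2‖ * m := by
      rw [r4]
      calc ‖G2‖ * (t * q) = t * ‖G2‖ * q := by ring
        _ ≤ t * ‖G2‖ * m := by
          apply mul_le_mul_of_nonneg_left hqm
          positivity
    rw [hD]
    calc s ≤ ‖F1‖ * p + ‖G2‖ * ‖v‖ := by rw [r3]; linarith only [r1, r2]
      _ ≤ ‖F1‖ * m + t * ‖G2‖ * m := by linarith only [r5, r6]
      _ = (‖F1‖ + t * ‖G2‖) * m := by ring
  -- main estimate
  have hEm : ε * (‖F2‖ * p + t⁻¹ * ‖G1‖ * q) ≤ ε * (E * m) := by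
    apply mul_le_mul_of_nonneg_left _ hε0
    rw [hE]
    have w1 : ‖F2‖ * p ≤ ‖F2‖ * m := mul_le_mul_of_nonneg_left hpm (norm_nonneg _)
    have w2 : t⁻¹ * ‖G1‖ * q ≤ t⁻¹ * ‖G1‖ * m := by
      apply mul_le_mul_of_nonneg_left hqm
      positivity
    calc ‖F2‖ * p + t⁻¹ * ‖G1‖ * q ≤ ‖F2‖ * m + t⁻¹ * ‖G1‖ * m := by
          linarith only [w1, w2]
      _ = (‖F2‖ + t⁻¹ * ‖G1‖) * m := by ring
  have A3' : l * q ^ 2 - t⁻¹ * ‖G1‖ * (ε * q) ≤ t⁻¹ * t⁻¹ * X2 := by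
    have h0 : (0:ℝ) ≤ t⁻¹ * t⁻¹ := by positivity
    have := mul_le_mul_of_nonneg_left A3 h0
    calc l * q ^ 2 - t⁻¹ * ‖G1‖ * (ε * q)
        = t⁻¹ * t⁻¹ * (l * ‖v‖ ^ 2 - ‖G1‖ * (ε * ‖v‖)) := by rw [hq]; ring
      _ ≤ t⁻¹ * t⁻¹ * X2 := this
  have hcs := scalar_cs a b r p q
  have main : (l - c) * m ^ 2 ≤ ε * (E * m) := by
    have comb : l * (p ^ 2 + q ^ 2) - ε * (‖F2‖ * p + t⁻¹ * ‖G1‖ * q)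
        ≤ a * p ^ 2 + b * q ^ 2 + r * (p * q) := by
      have := A1
      linarith only [A1, A2, A3']
    have final : l * (p ^ 2 + q ^ 2) - ε * (E * m) ≤ c * (p ^ 2 + q ^ 2) := by
      rw [hc]
      linarith only [comb, hEm, hcs]
    rw [hm2]
    linarith only [final]
  -- endgame
  have hm_pos : 0 < m := by
    have w1 : (0:ℝ) < (l / 2) ^ 2 := by positivity
    have w2 : (l / 2) ^ 2 ≤ (l - δ) ^ 2 := by nlinarith only [hδl, hδ0, hl0]
    have w3 : 0 < l * s := lt_of_lt_of_le (lt_of_lt_of_le w1 w2) hls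
    have w4 : 0 < s := by
      rcases lt_or_ge 0 s with h | h
      · exact h
      · nlinarith only [w3, h, hl0]
    nlinarith only [hsD, w4, hD0, hm0]
  have step1 : (l - c) * m ≤ ε * E := by
    have : ((l - c) * m) * m ≤ (ε * E) * m := by
      calc ((l - c) * m) * m = (l - c) * m ^ 2 := by ring
        _ ≤ ε * (E * m) := main
        _ = (ε * E) * m := by ring
    exact le_of_mul_le_mul_right this hm_pos
  have step2 : (l - c) * (l - δ) ^ 2 ≤ ε * M := by
    have t1 : (l - c) * (l - δ) ^ 2 ≤ (l - c) * (l * s) :=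
      mul_le_mul_of_nonneg_left hls hlc0.le
    have t2 : (l - c) * (l * s) ≤ (l - c) * (l * (D * m)) := by
      apply mul_le_mul_of_nonneg_left _ hlc0.le
      exact mul_le_mul_of_nonneg_left hsD hl0.le
    have t4 : (l * D) * ((l - c) * m) ≤ (l * D) * (ε * E) :=
      mul_le_mul_of_nonneg_left step1 (by positivity)
    calc (l - c) * (l - δ) ^ 2 ≤ (l - c) * (l * (D * m)) := le_trans t1 t2
      _ = (l * D) * ((l - c) * m) := by ring
      _ ≤ (l * D) * (ε * E) := t4
      _ = ε * M := by rw [hM]; ring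
  have hX0 : 0 ≤ (l - c) * (l - δ) ^ 2 := by positivity
  have step3 : ((l - c) * (l - δ) ^ 2) ^ 2 ≤ (4 * l * δ) * M ^ 2 := by
    have hεM : 0 ≤ ε * M := mul_nonneg hε0 hM0
    have w1 : ((l - c) * (l - δ) ^ 2) ^ 2 ≤ (ε * M) ^ 2 := by
      nlinarith only [step2, hX0, hεM]
    have w2 : (ε * M) ^ 2 ≤ (4 * l * δ) * M ^ 2 := by
      have := mul_le_mul_of_nonneg_right hε2 (sq_nonneg M)
      calc (ε * M) ^ 2 = ε ^ 2 * M ^ 2 := by ring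
        _ ≤ (4 * l * δ) * M ^ 2 := this
    linarith only [w1, w2]
  have step4 : K ≤ ((l - c) * (l - δ) ^ 2) ^ 2 := by
    have w1 : (l / 2) ^ 2 ≤ (l - δ) ^ 2 := by nlinarith only [hδl, hδ0, hl0]
    have w2 : (l - c) * (l / 2) ^ 2 ≤ (l - c) * (l - δ) ^ 2 :=
      mul_le_mul_of_nonneg_left w1 hlc0.le
    have w3 : 0 ≤ (l - c) * (l / 2) ^ 2 := by positivity
    rw [hK]
    nlinarith only [w2, w3, hX0]
  have step5 : (4 * l * δ) * M ^ 2 < K := by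
    have w1 : 0 < 4 * l * (M ^ 2 + 1) := by nlinarith only [hl0, sq_nonneg M]
    have w2 : δ * (4 * l * (M ^ 2 + 1)) ≤ K := by
      calc δ * (4 * l * (M ^ 2 + 1))
          ≤ (K / (4 * l * (M ^ 2 + 1))) * (4 * l * (M ^ 2 + 1)) :=
            mul_le_mul_of_nonneg_right hδK w1.le
        _ = K := by field_simp
    nlinarith only [w2, hδ0, hl0, hM0, hK0, mul_pos hδ0 hl0]
  linarith only [step3, step4, step5]
end

section
/- If S and T are positive bounded operators on a complex Hilbert space, then ‖S − T‖ ≥ max{‖S‖, ‖T‖} − ‖S^{1/2} T^{1/2}‖. -/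
set_option synthInstance.maxHeartbeats 1000000
set_option maxHeartbeats 1000000


open scoped InnerProductSpace
variable {H : Type*} [NormedAddCommGroup H] [InnerProductSpace ℂ H] [CompleteSpace H]

private lemma aux_norm_sub (S T : H →L[ℂ] H) (hS : 0 ≤ S) (hT : 0 ≤ T) :
    ‖S‖ - ‖CFC.sqrt S * CFC.sqrt T‖ ≤ ‖S - T‖ := by
  set a := CFC.sqrt S with ha_def
  set b := CFC.sqrt T with hb_def
  have ha : IsSelfAdjoint a := (CFC.sqrt_nonneg (a := S)).isSelfAdjoint
  have hb : IsSelfAdjoint b := (CFC.sqrt_nonneg (a := T)).isSelfAdjoint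
  have haa : a * a = S := CFC.sqrt_mul_sqrt_self S hS
  have hbb : b * b = T := CFC.sqrt_mul_sqrt_self T hT
  have hSsa : IsSelfAdjoint S := hS.isSelfAdjoint
  have hna : ‖a‖ * ‖a‖ = ‖S‖ := by
    rw [← haa, ← CStarRing.norm_star_mul_self (x := a), ha.star_eq]
  have hSS : ‖S * S‖ = ‖S‖ * ‖S‖ := by
    rw [← CStarRing.norm_star_mul_self (x := S), hSsa.star_eq]
  have key : S * S = a * (S - T) * a + (a * b) * star (a * b) := by
    rw [star_mul, ha.star_eq, hb.star_eq]
    rw [← haa, ← hbb]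
    noncomm_ring
  have h1 : ‖S‖ * ‖S‖ ≤ ‖S‖ * ‖S - T‖ + ‖a * b‖ * ‖a * b‖ := by
    calc ‖S‖ * ‖S‖ = ‖S * S‖ := hSS.symm
      _ ≤ ‖a * (S - T) * a‖ + ‖(a * b) * star (a * b)‖ := key ▸ norm_add_le _ _
      _ ≤ ‖a‖ * ‖S - T‖ * ‖a‖ + ‖a * b‖ * ‖a * b‖ := by
          gcongr
          · exact (norm_mul_le _ _).trans (by gcongr; exact norm_mul_le _ _)
          · exact CStarRing.norm_self_mul_star.le
      _ = ‖S‖ * ‖S - T‖ + ‖a * b‖ * ‖a * b‖ := by rw [mul_right_comm, hna]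
  have h2 : (0:ℝ) ≤ ‖S‖ := norm_nonneg _
  have h3 : (0:ℝ) ≤ ‖a * b‖ := norm_nonneg _
  have h4 : (0:ℝ) ≤ ‖S - T‖ := norm_nonneg _
  nlinarith [sq_nonneg (‖S‖ - ‖a * b‖), sq_nonneg (‖S‖ + ‖a * b‖)]

theorem norm_sub_ge_max_sub_norm_sqrt_mul_sqrt (S T : H →L[ℂ] H)
    (hS : 0 ≤ S) (hT : 0 ≤ T) :
    ‖S - T‖ ≥ max ‖S‖ ‖T‖ - ‖S ^ ((1 : ℝ) / 2) * T ^ ((1 : ℝ) / 2)‖ := by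
  have hS2 : S ^ ((1 : ℝ) / 2) = CFC.sqrt S := (CFC.sqrt_eq_rpow (a := S)).symm
  have hT2 : T ^ ((1 : ℝ) / 2) = CFC.sqrt T := (CFC.sqrt_eq_rpow (a := T)).symm
  rw [hS2, hT2, ge_iff_le, sub_le_iff_le_add, max_le_iff]
  constructor
  · have := aux_norm_sub S T hS hT
    linarith
  · have := aux_norm_sub T S hT hS
    have hrev : ‖T - S‖ = ‖S - T‖ := norm_sub_rev _ _
    have hst : ‖CFC.sqrt T * CFC.sqrt S‖ = ‖CFC.sqrt S * CFC.sqrt T‖ := by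
      rw [← norm_star (CFC.sqrt S * CFC.sqrt T), star_mul,
        (CFC.sqrt_nonneg (a := S)).isSelfAdjoint.star_eq,
        (CFC.sqrt_nonneg (a := T)).isSelfAdjoint.star_eq]
    linarith
end
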